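/- Let N ≥ 1 and 0 ≤ k ≤ N be integers, q ∈ ℝ with q ≠ 1, and θ ∈ ℝ such that 1 − (q−1)θm > 0 for every m ∈ {0,…,N}. Then ∑_{j=0}^{N−k} C(N−k,j) · exp_{2−q}(−θ(k+j)) = exp_{2−q}(−kθ) · Z_{q,N−k}( θ / (1 − k(q−1)θ) ). Consequently, in the q-exponential Erdős–Rényi ensemble on N node pairs the joint moment of any k distinct link variables equals exp_{2−q}(−kθ) · Z_{q,N−k}(θ/(1 − k(q−1)θ)) / Z_{q,N}(θ). -/

import Mathlib

open Finset

/-- The deformed exponential `exp_{2-q}(x) = (1 + (q-1)x)^(1/(q-1))`. -/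
noncomputable def qexp2q (q x : ℝ) : ℝ := (1 + (q - 1) * x) ^ ((1 : ℝ) / (q - 1))

/-- The `q`-exponential Erdős–Rényi partition function with `m` node pairs. -/
noncomputable def Zq (q : ℝ) (m : ℕ) (θ : ℝ) : ℝ :=
  ∑ j ∈ range (m + 1), (m.choose j : ℝ) * qexp2q q (-(θ * (j : ℝ)))

lemma qexp_key (q θ : ℝ) (k j : ℕ) (hA : 0 < 1 - (q-1)*θ*(k:ℝ))
    (hC : 0 < 1 - (q-1)*θ*((k:ℝ)+(j:ℝ))) :
    qexp2q q (-(θ * ((k:ℝ) + (j:ℝ)))) =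
      qexp2q q (-((k:ℝ)*θ)) * qexp2q q (-((θ / (1 - (k:ℝ)*(q-1)*θ)) * (j:ℝ))) := by
  unfold qexp2q
  have hA0 : (1 - (q-1)*θ*(k:ℝ)) ≠ 0 := ne_of_gt hA
  have h1 : 1 + (q-1) * -((k:ℝ)*θ) = 1 - (q-1)*θ*(k:ℝ) := by ring
  have h2 : 1 + (q-1) * -((θ / (1 - (k:ℝ)*(q-1)*θ)) * (j:ℝ))
      = (1 - (q-1)*θ*((k:ℝ)+(j:ℝ))) / (1 - (q-1)*θ*(k:ℝ)) := by
    rw [eq_div_iff hA0]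
    have : 1 - (k:ℝ)*(q-1)*θ = 1 - (q-1)*θ*(k:ℝ) := by ring
    rw [this]
    field_simp
    ring
  have h3 : 1 + (q-1) * -(θ * ((k:ℝ)+(j:ℝ))) = 1 - (q-1)*θ*((k:ℝ)+(j:ℝ)) := by ring
  rw [h1, h2, h3, ← Real.mul_rpow hA.le (div_pos hC hA).le]
  congr 1
  field_simp

lemma sum_fun_eq_sum_finset (N : ℕ) (S : Finset (Fin N)) (q θ : ℝ) :
    (∑ a : Fin N → Bool,
        (∏ i ∈ S, (if a i then (1 : ℝ) else 0)) *
          qexp2q q (-(θ * ∑ i : Fin N, (if a i then (1 : ℝ) else 0))))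
    = ∑ T : Finset (Fin N), (if S ⊆ T then (1:ℝ) else 0) * qexp2q q (-(θ * (T.card : ℝ))) := by
  refine (Fintype.sum_equiv (⟨fun T i => decide (i ∈ T), fun a => univ.filter (fun i => a i = true),
    ?_, ?_⟩ : Finset (Fin N) ≃ (Fin N → Bool)) _ _ ?_).symm
  · intro T; ext i; simp
  · intro a; funext i; simp
  · intro T
    simp only [Equiv.coe_fn_mk, decide_eq_true_eq]
    have h1 : (univ.filter (fun i : Fin N => i ∈ T)) = T := by
      ext i; simp
    rw [Finset.prod_boole, Finset.sum_boole, h1]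
    simp [Finset.subset_iff]

/-- Higher moments in the `q`-exponential Erdős–Rényi model: for `1 ≤ N`, `k ≤ N`,
`q ≠ 1` and `θ` with `1 - (q-1)θm > 0` for `0 ≤ m ≤ N`, one has
`∑_{j=0}^{N-k} C(N-k,j) exp_{2-q}(-θ(k+j)) = exp_{2-q}(-kθ) Z_{q,N-k}(θ/(1-k(q-1)θ))`,
and consequently the joint moment of any `k` distinct link variables equals
`exp_{2-q}(-kθ) Z_{q,N-k}(θ/(1-k(q-1)θ)) / Z_{q,N}(θ)`. -/
theorem qER_higher_moments (N k : ℕ) (hN : 1 ≤ N) (hk : k ≤ N) (q θ : ℝ) (hq : q ≠ 1)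
    (hpos : ∀ m : ℕ, m ≤ N → 0 < 1 - (q - 1) * θ * (m : ℝ)) :
    (∑ j ∈ range (N - k + 1),
        ((N - k).choose j : ℝ) * qexp2q q (-(θ * ((k : ℝ) + (j : ℝ))))
      = qexp2q q (-((k : ℝ) * θ)) * Zq q (N - k) (θ / (1 - (k : ℝ) * (q - 1) * θ)))
    ∧ ∀ S : Finset (Fin N), S.card = k →
        (∑ a : Fin N → Bool,
            (∏ i ∈ S, (if a i then (1 : ℝ) else 0)) *
              qexp2q q (-(θ * ∑ i : Fin N, (if a i then (1 : ℝ) else 0)))) / Zq q N θ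
          = qexp2q q (-((k : ℝ) * θ)) * Zq q (N - k) (θ / (1 - (k : ℝ) * (q - 1) * θ)) /
              Zq q N θ := by
  have hA : 0 < 1 - (q-1)*θ*(k:ℝ) := hpos k hk
  have part1 : ∑ j ∈ range (N - k + 1),
      ((N - k).choose j : ℝ) * qexp2q q (-(θ * ((k : ℝ) + (j : ℝ))))
      = qexp2q q (-((k : ℝ) * θ)) * Zq q (N - k) (θ / (1 - (k : ℝ) * (q - 1) * θ)) := by
    rw [Zq, mul_sum]
    refine Finset.sum_congr rfl fun j hj => ?_
    have hj' : j ≤ N - k := by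
      have := mem_range.mp hj; omega
    have hkj : k + j ≤ N := by omega
    have hC : 0 < 1 - (q-1)*θ*((k:ℝ)+(j:ℝ)) := by
      have := hpos (k+j) hkj
      push_cast at this
      linarith
    rw [qexp_key q θ k j hA hC]
    ring
  refine ⟨part1, fun S hS => ?_⟩
  congr 1
  rw [sum_fun_eq_sum_finset, ← part1]
  simp only [ite_mul, one_mul, zero_mul]
  rw [← Finset.sum_filter]
  have step3 : ∑ T ∈ univ.filter (fun T : Finset (Fin N) => S ⊆ T),
      qexp2q q (-(θ * (T.card : ℝ)))
      = ∑ U ∈ (univ \ S).powerset, qexp2q q (-(θ * ((k + U.card : ℕ) : ℝ))) := by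
    refine Finset.sum_nbij' (fun T => T \ S) (fun U => S ∪ U) ?_ ?_ ?_ ?_ ?_
    · intro T hT
      rw [mem_powerset]
      exact sdiff_subset_sdiff (subset_univ T) Subset.rfl
    · intro U _
      simp [Finset.subset_union_left]
    · intro T hT
      exact Finset.union_sdiff_of_subset (mem_filter.mp hT).2
    · intro U hU
      have hdisj : Disjoint S U :=
        ((Finset.subset_sdiff.mp (mem_powerset.mp hU)).2).symm
      exact Finset.union_sdiff_cancel_left hdisj
    · intro T hT
      have hsub : S ⊆ T := (mem_filter.mp hT).2
      have : (T \ S).card + S.card = T.card := Finset.card_sdiff_add_card_eq_card hsub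
      congr 2
      push_cast
      rw [hS] at this
      push_cast [← this]
      ring
  rw [step3, Finset.sum_powerset]
  have hcard : (univ \ S).card = N - k := by
    rw [Finset.card_sdiff_of_subset (subset_univ S), hS, card_univ, Fintype.card_fin]
  rw [hcard]
  refine Finset.sum_congr rfl fun j hj => ?_
  have : ∀ U ∈ Finset.powersetCard j (univ \ S),
      qexp2q q (-(θ * ((k + U.card : ℕ) : ℝ))) = qexp2q q (-(θ * ((k : ℝ) + (j : ℝ)))) := by
    intro U hU
    have := (Finset.mem_powersetCard.mp hU).2
    rw [this]
    push_cast
    ring_nf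
  rw [Finset.sum_congr rfl this, Finset.sum_const, Finset.card_powersetCard, hcard,
    nsmul_eq_mul]
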